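/- Let a, b be two distinct non-antipodal points on a spherical circle of radius ρ ∈ (0, π/2) on S² with center o, and let t range over the points of one of the two open arcs of the circle determined by a and b. Then the spherical angle ∠atb is maximized when t is equidistant from a and b. -/

import Mathlib

open scoped RealInnerProductSpace

/-- Spherical distance between unit vectors of `E³`. -/
noncomputable def sdist (p q : EuclideanSpace ℝ (Fin 3)) : ℝ := Real.arccos ⟪p, q⟫

/-- The spherical angle `∠ a t b`: the angle between the tangent directions at `t`
of the great-circle arcs `t a` and `t b`. -/
noncomputable def sAngle (a t b : EuclideanSpace ℝ (Fin 3)) : ℝ :=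
  InnerProductGeometry.angle (a - ⟪a, t⟫ • t) (b - ⟪b, t⟫ • t)

private lemma arccos_anti {x y : ℝ} (h : x ≤ y) : Real.arccos y ≤ Real.arccos x := by
  rw [Real.arccos_eq_pi_div_two_sub_arcsin, Real.arccos_eq_pi_div_two_sub_arcsin]
  have := Real.monotone_arcsin h
  linarith

private lemma exists_angle {s x y : ℝ} (hs : 0 < s) (h : x ^ 2 + y ^ 2 = s ^ 2) :
    ∃ φ : ℝ, x = s * Real.cos φ ∧ y = s * Real.sin φ := by
  have hns : s ≠ 0 := ne_of_gt hs
  have h1 : -1 ≤ x / s := by rw [le_div_iff₀ hs]; nlinarith [sq_nonneg y, sq_nonneg (x + s)]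
  have h2 : x / s ≤ 1 := by rw [div_le_iff₀ hs]; nlinarith [sq_nonneg y, sq_nonneg (x - s)]
  rcases le_or_gt 0 y with hy | hy
  · refine ⟨Real.arccos (x / s), ?_, ?_⟩
    · rw [Real.cos_arccos h1 h2]; field_simp
    · rw [Real.sin_arccos]
      have hxy : 1 - (x / s) ^ 2 = (y / s) ^ 2 := by field_simp; nlinarith
      rw [hxy, Real.sqrt_sq (by positivity)]; field_simp
  · refine ⟨-Real.arccos (x / s), ?_, ?_⟩
    · rw [Real.cos_neg, Real.cos_arccos h1 h2]; field_simp
    · rw [Real.sin_neg, Real.sin_arccos]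
      have hxy : 1 - (x / s) ^ 2 = ((-y) / s) ^ 2 := by field_simp; nlinarith
      have hyn : 0 ≤ (-y) / s := div_nonneg (by linarith) hs.le
      rw [hxy, Real.sqrt_sq hyn]
      field_simp

private lemma mono_div_sqrt {G x y : ℝ} (hG : 0 < G) (hxy : x ≤ y) :
    x / Real.sqrt (x ^ 2 + G) ≤ y / Real.sqrt (y ^ 2 + G) := by
  have hxp : (0:ℝ) < x ^ 2 + G := by positivity
  have hyp : (0:ℝ) < y ^ 2 + G := by positivity
  have hsx : 0 < Real.sqrt (x ^ 2 + G) := Real.sqrt_pos.mpr hxp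
  have hsy : 0 < Real.sqrt (y ^ 2 + G) := Real.sqrt_pos.mpr hyp
  have hsx2 : Real.sqrt (x ^ 2 + G) ^ 2 = x ^ 2 + G := Real.sq_sqrt hxp.le
  have hsy2 : Real.sqrt (y ^ 2 + G) ^ 2 = y ^ 2 + G := Real.sq_sqrt hyp.le
  rw [div_le_div_iff₀ hsx hsy]
  rcases le_or_gt x 0 with hx | hx
  · rcases le_or_gt 0 y with hy | hy
    · have h1 : x * Real.sqrt (y ^ 2 + G) ≤ 0 := mul_nonpos_of_nonpos_of_nonneg hx hsy.le
      have h2 : 0 ≤ y * Real.sqrt (x ^ 2 + G) := mul_nonneg hy hsx.le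
      linarith
    · have h1 : (-y) * Real.sqrt (x ^ 2 + G) ≤ (-x) * Real.sqrt (y ^ 2 + G) := by
        apply le_of_pow_le_pow_left₀ two_ne_zero
          (mul_nonneg (by linarith) hsy.le)
        have hy2 : y ^ 2 ≤ x ^ 2 := by nlinarith
        calc ((-y) * Real.sqrt (x ^ 2 + G)) ^ 2 = y ^ 2 * (x ^ 2 + G) := by
              rw [mul_pow, hsx2]; ring
          _ ≤ x ^ 2 * (y ^ 2 + G) := by nlinarith
          _ = ((-x) * Real.sqrt (y ^ 2 + G)) ^ 2 := by rw [mul_pow, hsy2]; ring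
      linarith
  · have hy : 0 < y := lt_of_lt_of_le hx hxy
    have h1 : x * Real.sqrt (y ^ 2 + G) ≤ y * Real.sqrt (x ^ 2 + G) := by
      apply le_of_pow_le_pow_left₀ two_ne_zero (mul_nonneg hy.le hsx.le)
      have hy2 : x ^ 2 ≤ y ^ 2 := by nlinarith
      calc (x * Real.sqrt (y ^ 2 + G)) ^ 2 = x ^ 2 * (y ^ 2 + G) := by
            rw [mul_pow, hsy2]
        _ ≤ y ^ 2 * (x ^ 2 + G) := by nlinarith
        _ = (y * Real.sqrt (x ^ 2 + G)) ^ 2 := by rw [mul_pow, hsx2]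
    linarith

private lemma sAngle_eq_arccos (a t b : EuclideanSpace ℝ (Fin 3))
    (ha : ‖a‖ = 1) (hb : ‖b‖ = 1) (ht : ‖t‖ = 1) :
    sAngle a t b = Real.arccos ((⟪a, b⟫ - ⟪a, t⟫ * ⟪b, t⟫) /
      (Real.sqrt (1 - ⟪a, t⟫ ^ 2) * Real.sqrt (1 - ⟪b, t⟫ ^ 2))) := by
  have htt : ⟪t, t⟫ = (1 : ℝ) := by
    rw [real_inner_self_eq_norm_mul_norm, ht]; norm_num
  have hinner : ⟪a - ⟪a, t⟫ • t, b - ⟪b, t⟫ • t⟫ = ⟪a, b⟫ - ⟪a, t⟫ * ⟪b, t⟫ := by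
    rw [inner_sub_left, inner_sub_right, inner_sub_right, real_inner_smul_left,
      real_inner_smul_left, real_inner_smul_right, real_inner_smul_right, htt,
      real_inner_comm t b]
    ring
  have hnorm : ∀ v : EuclideanSpace ℝ (Fin 3), ‖v‖ = 1 →
      ‖v - ⟪v, t⟫ • t‖ = Real.sqrt (1 - ⟪v, t⟫ ^ 2) := by
    intro v hv
    rw [← Real.sqrt_sq (norm_nonneg (v - ⟪v, t⟫ • t)), norm_sub_sq_real,
      real_inner_smul_right, norm_smul, hv, ht]
    congr 1
    simp [sq_abs]
    ring
  rw [sAngle, InnerProductGeometry.angle, hinner, hnorm a ha, hnorm b hb]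

private lemma idents (c s k m U W : ℝ) (hs2 : s ^ 2 = 1 - c ^ 2)
    (hm2 : m ^ 2 = 1 - k ^ 2) (hw2 : W ^ 2 = 1 - U ^ 2) :
    (c ^ 2 + s ^ 2 * (2 * k ^ 2 - 1)
        - (c ^ 2 + s ^ 2 * (U * k + W * m)) * (c ^ 2 + s ^ 2 * (U * k - W * m))
      = -(s ^ 2 * (U - k) * (U * s ^ 2 + k * (1 + c ^ 2)))) ∧
    ((1 - (c ^ 2 + s ^ 2 * (U * k + W * m)) ^ 2) * (1 - (c ^ 2 + s ^ 2 * (U * k - W * m)) ^ 2)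
      = (s ^ 2 * (U - k)) ^ 2 *
        ((U * s ^ 2 + k * (1 + c ^ 2)) ^ 2 + 4 * c ^ 2 * (1 - k ^ 2))) := by
  constructor
  · linear_combination ((-1) + (1)*U^2 + (1)*m^2*W^2 + (1)*k^2 + (-1)*k^2*U^2 + (1)*s^2*U^2 + (1)*s^2*m^2*W^2 + (-1)*s^2*k*U + (-1)*s^2*k^2*U^2 + (-1)*c^2*U^2 + (-1)*c^2*m^2*W^2 + (-1)*c^2*k^2 + (1)*c^2*k^2*U^2) * hs2 + ((1)*W^2 + (-2)*c^2*W^2 + (1)*c^4*W^2) * hm2 + ((1) + (-1)*k^2 + (-2)*c^2 + (2)*c^2*k^2 + (1)*c^4 + (-1)*c^4*k^2) * hw2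
  · have hJ1 : (1 - (c ^ 2 + s ^ 2 * (U * k + W * m))) * (1 - (c ^ 2 + s ^ 2 * (U * k - W * m)))
        = (s ^ 2 * (U - k)) ^ 2 := by
      linear_combination ((-1)*U^2 + (-1)*m^2*W^2 + (-1)*k^2 + (1)*k^2*U^2 + (-1)*s^2*U^2 + (-1)*s^2*m^2*W^2 + (2)*s^2*k*U + (-1)*s^2*k^2 + (1)*s^2*k^2*U^2 + (1)*c^2*U^2 + (1)*c^2*m^2*W^2 + (1)*c^2*k^2 + (-1)*c^2*k^2*U^2) * hs2 + ((-1)*W^2 + (2)*c^2*W^2 + (-1)*c^4*W^2) * hm2 + ((-1) + (1)*k^2 + (2)*c^2 + (-2)*c^2*k^2 + (-1)*c^4 + (1)*c^4*k^2) * hw2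
    have hJ2 : (1 + (c ^ 2 + s ^ 2 * (U * k + W * m))) * (1 + (c ^ 2 + s ^ 2 * (U * k - W * m)))
        = (U * s ^ 2 + k * (1 + c ^ 2)) ^ 2 + 4 * c ^ 2 * (1 - k ^ 2) := by
      linear_combination ((-1)*U^2 + (-1)*m^2*W^2 + (1)*k^2*U^2 + (-1)*s^2*U^2 + (-1)*s^2*m^2*W^2 + (1)*s^2*k^2*U^2 + (1)*c^2*U^2 + (1)*c^2*m^2*W^2 + (-1)*c^2*k^2*U^2) * hs2 + ((-1)*W^2 + (2)*c^2*W^2 + (-1)*c^4*W^2) * hm2 + ((-1) + (1)*k^2 + (2)*c^2 + (-2)*c^2*k^2 + (-1)*c^4 + (1)*c^4*k^2) * hw2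
    calc (1 - (c ^ 2 + s ^ 2 * (U * k + W * m)) ^ 2) * (1 - (c ^ 2 + s ^ 2 * (U * k - W * m)) ^ 2)
        = ((1 - (c ^ 2 + s ^ 2 * (U * k + W * m))) * (1 - (c ^ 2 + s ^ 2 * (U * k - W * m)))) *
          ((1 + (c ^ 2 + s ^ 2 * (U * k + W * m))) * (1 + (c ^ 2 + s ^ 2 * (U * k - W * m)))) := by
          ring
      _ = _ := by rw [hJ1, hJ2]


private lemma aux_k_lt_one {k : ℝ} (h : k ^ 2 < 1) : k < 1 := by nlinarith

private lemma aux_neg_one_lt {k : ℝ} (h : k ^ 2 < 1) : -1 < k := by nlinarith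

private lemma aux_pos_factor {x y : ℝ} (h : 0 < x * y) (hy : 0 < y) : 0 < x := by nlinarith

private lemma aux_neg_factor {x y : ℝ} (h : 0 < x * y) (hy : y < 0) : x < 0 := by nlinarith

private lemma aux_u_bounds {u w : ℝ} (h : w ^ 2 = 1 - u ^ 2) : -1 ≤ u ∧ u ≤ 1 := by
  constructor <;> nlinarith [sq_nonneg w]

private lemma aux_k2 {c s k : ℝ} (hs : 0 < s) (hcs : s ^ 2 = 1 - c ^ 2)
    (h : c ^ 2 + s ^ 2 * (2 * k ^ 2 - 1) < 1) : k ^ 2 < 1 := by nlinarith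

private lemma aux_m0 {k m : ℝ} (hkm : m ^ 2 = 1 - k ^ 2) (hk2 : k ^ 2 < 1) : m ≠ 0 := by
  intro h
  rw [h] at hkm
  norm_num at hkm
  nlinarith

private lemma unit_abs_bound (v v' : EuclideanSpace ℝ (Fin 3)) (hv : ‖v‖ = 1)
    (hv' : ‖v'‖ = 1) : (0:ℝ) ≤ 1 - ⟪v, v'⟫ ^ 2 := by
  have h := abs_real_inner_le_norm v v'
  rw [hv, hv'] at h
  rw [one_mul] at h
  have h1 := abs_le.mp h
  nlinarith [h1.1, h1.2]

set_option maxHeartbeats 2000000 in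
theorem stmt15 (ρ : ℝ) (hρ : ρ ∈ Set.Ioo 0 (Real.pi / 2))
    (o a b t t' : EuclideanSpace ℝ (Fin 3))
    (ho : ‖o‖ = 1) (ha : ‖a‖ = 1) (hb : ‖b‖ = 1) (ht : ‖t‖ = 1) (ht' : ‖t'‖ = 1)
    (haC : sdist o a = ρ) (hbC : sdist o b = ρ) (htC : sdist o t = ρ) (ht'C : sdist o t' = ρ)
    (hab : a ≠ b) (hab' : a ≠ -b)
    -- `t` and `t'` lie strictly on the same side of the great circle through `a` and `b`:
    (n : EuclideanSpace ℝ (Fin 3)) (hn : n ≠ 0) (hna : ⟪n, a⟫ = 0) (hnb : ⟪n, b⟫ = 0)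
    (hnt : 0 < ⟪n, t⟫) (hnt' : 0 < ⟪n, t'⟫)
    -- `t'` is equidistant from `a` and `b`:
    (heq : sdist t' a = sdist t' b) :
    sAngle a t b ≤ sAngle a t' b := by
  obtain ⟨hρ0, hρ1⟩ := hρ
  have hπ := Real.pi_pos
  set c := Real.cos ρ with hcdef
  set s := Real.sin ρ with hsdef
  have hc : 0 < c := Real.cos_pos_of_mem_Ioo ⟨by linarith, hρ1⟩
  have hs : 0 < s := Real.sin_pos_of_pos_of_lt_pi hρ0 (by linarith)
  have hcs : s ^ 2 = 1 - c ^ 2 := by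
    have := Real.sin_sq_add_cos_sq ρ
    rw [hcdef, hsdef]; linarith
  -- inner products of circle points with the center equal `c`
  have key_inner : ∀ v w : EuclideanSpace ℝ (Fin 3), ‖v‖ = 1 → ‖w‖ = 1 →
      ∀ r : ℝ, sdist v w = r → ⟪v, w⟫ = Real.cos r := by
    intro v w hv hw r hr
    have h1 : |⟪v, w⟫| ≤ 1 := by
      have h := abs_real_inner_le_norm v w
      rw [hv, hw] at h; simpa using h
    have h2 := congrArg Real.cos hr
    simp only [sdist] at h2
    rwa [Real.cos_arccos (by linarith [(abs_le.mp h1).1]) (by linarith [(abs_le.mp h1).2])] at h2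
  have hoa : ⟪o, a⟫ = c := key_inner o a ho ha ρ haC
  have hob : ⟪o, b⟫ = c := key_inner o b ho hb ρ hbC
  have hot : ⟪o, t⟫ = c := key_inner o t ho ht ρ htC
  have hot' : ⟪o, t'⟫ = c := key_inner o t' ho ht' ρ ht'C
  have heqi : ⟪t', a⟫ = ⟪t', b⟫ := by
    have h1 := key_inner t' a ht' ha _ rfl
    have h2 := key_inner t' b ht' hb _ heq.symm
    rw [h1, h2]
  -- an adapted orthonormal basis
  have ho0 : o ≠ 0 := fun h => by simp [h] at ho
  haveI : Fact (Module.finrank ℝ (EuclideanSpace ℝ (Fin 3)) = 2 + 1) :=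
    ⟨by simp [finrank_euclideanSpace_fin]⟩
  set B2 := OrthonormalBasis.fromOrthogonalSpanSingleton (𝕜 := ℝ) 2 ho0 with hB2
  set e1 : EuclideanSpace ℝ (Fin 3) := ↑(B2 0) with he1def
  set e2 : EuclideanSpace ℝ (Fin 3) := ↑(B2 1) with he2def
  have hoe1 : ⟪o, e1⟫ = 0 :=
    Submodule.mem_orthogonal_singleton_iff_inner_right.mp (B2 0).2
  have hoe2 : ⟪o, e2⟫ = 0 :=
    Submodule.mem_orthogonal_singleton_iff_inner_right.mp (B2 1).2
  have decomp : ∀ v : EuclideanSpace ℝ (Fin 3),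
      v = ⟪o, v⟫ • o + ⟪e1, v⟫ • e1 + ⟪e2, v⟫ • e2 := by
    intro v
    have hw : v - ⟪o, v⟫ • o ∈ (Submodule.span ℝ {o})ᗮ := by
      rw [Submodule.mem_orthogonal_singleton_iff_inner_right, inner_sub_right,
        real_inner_smul_right, real_inner_self_eq_norm_mul_norm, ho]
      ring
    set wv : ↥(Submodule.span ℝ {o})ᗮ := ⟨v - ⟪o, v⟫ • o, hw⟩ with hwv
    have hsum := congrArg (Subtype.val) (B2.sum_repr' wv)
    rw [Fin.sum_univ_two] at hsum
    push_cast at hsum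
    have h0 : ⟪B2 0, wv⟫ = ⟪e1, v⟫ := by
      rw [Submodule.coe_inner, hwv]
      show ⟪e1, v - ⟪o, v⟫ • o⟫ = ⟪e1, v⟫
      rw [inner_sub_right, real_inner_smul_right, real_inner_comm o e1, hoe1]
      ring
    have h1 : ⟪B2 1, wv⟫ = ⟪e2, v⟫ := by
      rw [Submodule.coe_inner, hwv]
      show ⟪e2, v - ⟪o, v⟫ • o⟫ = ⟪e2, v⟫
      rw [inner_sub_right, real_inner_smul_right, real_inner_comm o e2, hoe2]
      ring
    rw [h0, h1] at hsum
    have h2 : ⟪e1, v⟫ • e1 + ⟪e2, v⟫ • e2 = v - ⟪o, v⟫ • o := hsum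
    rw [add_assoc, h2]
    abel
  have parseval : ∀ v u : EuclideanSpace ℝ (Fin 3),
      ⟪v, u⟫ = ⟪o, v⟫ * ⟪o, u⟫ + ⟪e1, v⟫ * ⟪e1, u⟫ + ⟪e2, v⟫ * ⟪e2, u⟫ := by
    intro v u
    conv_lhs => rw [decomp v]
    rw [inner_add_left, inner_add_left, real_inner_smul_left, real_inner_smul_left,
      real_inner_smul_left]
  -- angular coordinates for the four circle points
  have coords : ∀ v : EuclideanSpace ℝ (Fin 3), ‖v‖ = 1 → ⟪o, v⟫ = c →
      ∃ φ : ℝ, ⟪e1, v⟫ = s * Real.cos φ ∧ ⟪e2, v⟫ = s * Real.sin φ := by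
    intro v hv hov
    apply exists_angle hs
    have h1 : ⟪v, v⟫ = 1 := by rw [real_inner_self_eq_norm_mul_norm, hv]; norm_num
    have h2 := parseval v v
    rw [hov, h1] at h2
    linear_combination -h2 - hcs
  obtain ⟨A, hxa, hya⟩ := coords a ha hoa
  obtain ⟨B, hxb, hyb⟩ := coords b hb hob
  obtain ⟨T, hxt, hyt⟩ := coords t ht hot
  obtain ⟨T', hxt', hyt'⟩ := coords t' ht' hot'
  have inner_pts : ∀ (v v' : EuclideanSpace ℝ (Fin 3)) (φ φ' : ℝ),
      ⟪o, v⟫ = c → ⟪o, v'⟫ = c →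
      ⟪e1, v⟫ = s * Real.cos φ → ⟪e2, v⟫ = s * Real.sin φ →
      ⟪e1, v'⟫ = s * Real.cos φ' → ⟪e2, v'⟫ = s * Real.sin φ' →
      ⟪v, v'⟫ = c ^ 2 + s ^ 2 * Real.cos (φ - φ') := by
    intro v v' φ φ' hov hov' hx hy hx' hy'
    rw [parseval v v', hov, hov', hx, hy, hx', hy', Real.cos_sub]
    ring
  -- abbreviations
  set δ := (A - B) / 2 with hδdef
  set M := (A + B) / 2 with hMdef
  set θ := T - M with hθdef
  set θ' := T' - M with hθ'def
  set k := Real.cos δ with hkdef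
  set m := Real.sin δ with hmdef
  set u := Real.cos θ with hudef
  set w := Real.sin θ with hwdef
  set u' := Real.cos θ' with hu'def
  set w' := Real.sin θ' with hw'def
  set CM := Real.cos M with hCMdef
  set SM := Real.sin M with hSMdef
  have hkm : m ^ 2 = 1 - k ^ 2 := by
    rw [hkdef, hmdef]; linear_combination Real.sin_sq_add_cos_sq δ
  have huw : w ^ 2 = 1 - u ^ 2 := by
    rw [hudef, hwdef]; linear_combination Real.sin_sq_add_cos_sq θ
  have hu'w' : w' ^ 2 = 1 - u' ^ 2 := by
    rw [hu'def, hw'def]; linear_combination Real.sin_sq_add_cos_sq θ'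
  have hpyM : CM ^ 2 + SM ^ 2 = 1 := by
    rw [hCMdef, hSMdef]; linear_combination Real.sin_sq_add_cos_sq M
  have hA : A = M + δ := by rw [hMdef, hδdef]; ring
  have hB : B = M - δ := by rw [hMdef, hδdef]; ring
  have hT : T = M + θ := by rw [hθdef]; ring
  have hT' : T' = M + θ' := by rw [hθ'def]; ring
  -- the five inner products among circle points
  have hcosat : u * k + w * m = Real.cos (A - T) := by
    rw [hudef, hkdef, hwdef, hmdef, ← Real.cos_sub,
      show θ - δ = -(A - T) by rw [hθdef, hδdef, hMdef]; ring, Real.cos_neg]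
  have hcosbt : u * k - w * m = Real.cos (B - T) := by
    rw [hudef, hkdef, hwdef, hmdef]
    rw [show u * k - w * m = Real.cos θ * Real.cos δ - Real.sin θ * Real.sin δ by
      rw [hudef, hkdef, hwdef, hmdef], ← Real.cos_add,
      show θ + δ = -(B - T) by rw [hθdef, hδdef, hMdef]; ring, Real.cos_neg]
  have hcosat' : u' * k + w' * m = Real.cos (A - T') := by
    rw [hu'def, hkdef, hw'def, hmdef, ← Real.cos_sub,
      show θ' - δ = -(A - T') by rw [hθ'def, hδdef, hMdef]; ring, Real.cos_neg]
  have hcosbt' : u' * k - w' * m = Real.cos (B - T') := by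
    rw [show u' * k - w' * m = Real.cos θ' * Real.cos δ - Real.sin θ' * Real.sin δ by
      rw [hu'def, hkdef, hw'def, hmdef], ← Real.cos_add,
      show θ' + δ = -(B - T') by rw [hθ'def, hδdef, hMdef]; ring, Real.cos_neg]
  have hcosab : 2 * k ^ 2 - 1 = Real.cos (A - B) := by
    rw [hkdef, show A - B = 2 * δ by rw [hδdef]; ring, Real.cos_two_mul]
  have hp : ⟪a, t⟫ = c ^ 2 + s ^ 2 * (u * k + w * m) := by
    rw [inner_pts a t A T hoa hot hxa hya hxt hyt, hcosat]
  have hq : ⟪b, t⟫ = c ^ 2 + s ^ 2 * (u * k - w * m) := by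
    rw [inner_pts b t B T hob hot hxb hyb hxt hyt, hcosbt]
  have hp' : ⟪a, t'⟫ = c ^ 2 + s ^ 2 * (u' * k + w' * m) := by
    rw [inner_pts a t' A T' hoa hot' hxa hya hxt' hyt', hcosat']
  have hq' : ⟪b, t'⟫ = c ^ 2 + s ^ 2 * (u' * k - w' * m) := by
    rw [inner_pts b t' B T' hob hot' hxb hyb hxt' hyt', hcosbt']
  have hr : ⟪a, b⟫ = c ^ 2 + s ^ 2 * (2 * k ^ 2 - 1) := by
    rw [inner_pts a b A B hoa hob hxa hya hxb hyb, hcosab]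
  -- m ≠ 0 from a ≠ b
  have hrlt : ⟪a, b⟫ < 1 := by
    have hle : ⟪a, b⟫ ≤ 1 := by
      have h := real_inner_le_norm a b
      rw [ha, hb] at h; simpa using h
    have hne : ⟪a, b⟫ ≠ 1 := fun h => hab ((inner_eq_one_iff_of_norm_eq_one ha hb).mp h)
    exact lt_of_le_of_ne hle hne
  have hk2 : k ^ 2 < 1 := by
    rw [hr] at hrlt
    exact aux_k2 hs hcs hrlt
  have hm0 : m ≠ 0 := aux_m0 hkm hk2
  -- equidistance gives w' = 0, u' = ±1
  have hw'0 : w' = 0 := by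
    have h3 : c ^ 2 + s ^ 2 * (u' * k + w' * m) = c ^ 2 + s ^ 2 * (u' * k - w' * m) := by
      rw [← hp', ← hq', ← real_inner_comm a t', ← real_inner_comm b t']
      exact heqi
    have h4 : (2 * s ^ 2 * m) * w' = 0 := by linear_combination h3
    rcases mul_eq_zero.mp h4 with h5 | h5
    · exfalso
      rcases mul_eq_zero.mp h5 with h6 | h6
      · exact (ne_of_gt (mul_pos two_pos (pow_pos hs 2))) h6
      · exact hm0 h6
    · exact h5
  have hu'sq : u' ^ 2 = 1 := by
    rw [hw'0] at hu'w'; linear_combination hu'w'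
  -- the side condition
  set cn := ⟪o, n⟫ with hcndef
  set xn := ⟪e1, n⟫ with hxndef
  set yn := ⟪e2, n⟫ with hyndef
  have eqa : cn * c + xn * (s * (CM * k - SM * m)) + yn * (s * (SM * k + CM * m)) = 0 := by
    have h := parseval n a
    rw [hna] at h
    rw [hoa, hxa, hya, hA, Real.cos_add, Real.sin_add] at h
    rw [← hkdef, ← hmdef, ← hCMdef, ← hSMdef] at h
    linear_combination -h
  have eqb : cn * c + xn * (s * (CM * k + SM * m)) + yn * (s * (SM * k - CM * m)) = 0 := by
    have h := parseval n b
    rw [hnb] at h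
    rw [hob, hxb, hyb, hB, Real.cos_sub, Real.sin_sub] at h
    rw [← hkdef, ← hmdef, ← hCMdef, ← hSMdef] at h
    linear_combination -h
  have h2' : yn * CM - xn * SM = 0 := by
    have e3 : (2 * s * m) * (yn * CM - xn * SM) = 0 := by linear_combination eqa - eqb
    have hsm : (2 : ℝ) * s * m ≠ 0 := by
      apply mul_ne_zero (mul_ne_zero two_ne_zero (ne_of_gt hs)) hm0
    exact (mul_eq_zero.mp e3).resolve_left hsm
  set lam := xn * CM + yn * SM with hlamdef
  have hxn : xn = lam * CM := by
    rw [hlamdef]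
    linear_combination (-xn) * hpyM - SM * h2'
  have hyn : yn = lam * SM := by
    rw [hlamdef]
    linear_combination (-yn) * hpyM + CM * h2'
  have hsum : cn * c = -(s * k * lam) := by
    linear_combination (1/2 : ℝ) * eqa + (1/2 : ℝ) * eqb + (s * k * CM) * hxn + (s * k * SM) * hyn
      + (s * k * lam) * hpyM
  have hnt2 : 0 < s * lam * (u - k) := by
    have hexp : ⟪n, t⟫ = s * lam * (u - k) := by
      rw [parseval n t, hot, hxt, hyt, hT, Real.cos_add, Real.sin_add]
      rw [← hudef, ← hwdef, ← hCMdef, ← hSMdef]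
      linear_combination hsum + (s * (CM * u - SM * w)) * hxn + (s * (SM * u + CM * w)) * hyn
        + (s * lam * u) * hpyM
    rwa [hexp] at hnt
  have hnt'2 : 0 < s * lam * (u' - k) := by
    have hexp : ⟪n, t'⟫ = s * lam * (u' - k) := by
      rw [parseval n t', hot', hxt', hyt', hT', Real.cos_add, Real.sin_add]
      rw [← hu'def, ← hw'def, ← hCMdef, ← hSMdef]
      linear_combination hsum + (s * (CM * u' - SM * w')) * hxn + (s * (SM * u' + CM * w')) * hyn
        + (s * lam * u') * hpyM
    rwa [hexp] at hnt'
  -- bounds needed for square roots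
  have habs := unit_abs_bound
  have hat2 : (0:ℝ) ≤ 1 - (c ^ 2 + s ^ 2 * (u * k + w * m)) ^ 2 := hp ▸ habs a t ha ht
  have hbt2 : (0:ℝ) ≤ 1 - (c ^ 2 + s ^ 2 * (u * k - w * m)) ^ 2 := hq ▸ habs b t hb ht
  have hat'2 : (0:ℝ) ≤ 1 - (c ^ 2 + s ^ 2 * (u' * k + w' * m)) ^ 2 := hp' ▸ habs a t' ha ht'
  have hbt'2 : (0:ℝ) ≤ 1 - (c ^ 2 + s ^ 2 * (u' * k - w' * m)) ^ 2 := hq' ▸ habs b t' hb ht'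
  obtain ⟨hI1, hI2⟩ := idents c s k m u w hcs hkm huw
  obtain ⟨hI1', hI2'⟩ := idents c s k m u' w' hcs hkm hu'w'
  have hG : 0 < 4 * c ^ 2 * (1 - k ^ 2) :=
    mul_pos (mul_pos (by norm_num) (pow_pos hc 2)) (sub_pos.mpr hk2)
  have hcancel : ∀ (Aa z v : ℝ), Aa ≠ 0 → -(Aa * z) / (Aa * v) = -(z / v) := by
    intro Aa z v hA0
    rw [neg_div, mul_div_mul_left _ _ hA0]
  have hcancel2 : ∀ (Aa z v : ℝ), Aa ≠ 0 → (Aa * z) / (Aa * v) = z / v := by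
    intro Aa z v hA0
    rw [mul_div_mul_left _ _ hA0]
  -- rewrite the goal
  rw [sAngle_eq_arccos a t b ha hb ht, sAngle_eq_arccos a t' b ha hb ht']
  apply arccos_anti
  rw [hp, hq, hr, hp', hq']
  rw [← Real.sqrt_mul hat2, ← Real.sqrt_mul hat'2]
  rw [hI1, hI2, hI1', hI2']
  -- case split on which side
  have hu'cases : u' = 1 ∨ u' = -1 := by
    have h : (u' - 1) * (u' + 1) = 0 := by linear_combination hu'sq
    rcases mul_eq_zero.mp h with h | h
    · left; exact sub_eq_zero.mp h
    · right; exact eq_neg_of_add_eq_zero_left h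
  rcases hu'cases with hu'1 | hu'1
  · -- near case : u' = 1, t on near arc
    have hk1 : k < 1 := aux_k_lt_one hk2
    have hslam : 0 < s * lam := by
      rw [hu'1] at hnt'2
      exact aux_pos_factor hnt'2 (sub_pos.mpr hk1)
    have hnt2' : 0 < (u - k) * (s * lam) := by rw [mul_comm]; exact hnt2
    have huk : 0 < u - k := aux_pos_factor hnt2' hslam
    have hu'k : 0 < u' - k := by rw [hu'1]; exact sub_pos.mpr hk1
    have hA0 : 0 < s ^ 2 * (u - k) := mul_pos (pow_pos hs 2) huk
    have hA0' : 0 < s ^ 2 * (u' - k) := mul_pos (pow_pos hs 2) hu'k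
    rw [Real.sqrt_mul (sq_nonneg (s ^ 2 * (u - k)))
        ((u * s ^ 2 + k * (1 + c ^ 2)) ^ 2 + 4 * c ^ 2 * (1 - k ^ 2)), Real.sqrt_sq hA0.le,
      Real.sqrt_mul (sq_nonneg (s ^ 2 * (u' - k)))
        ((u' * s ^ 2 + k * (1 + c ^ 2)) ^ 2 + 4 * c ^ 2 * (1 - k ^ 2)), Real.sqrt_sq hA0'.le]
    rw [hcancel _ _ _ (ne_of_gt hA0), hcancel _ _ _ (ne_of_gt hA0')]
    apply neg_le_neg
    apply mono_div_sqrt hG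
    have hu1 : u ≤ u' := by rw [hu'1]; exact (aux_u_bounds huw).2
    exact add_le_add_left (mul_le_mul_of_nonneg_right hu1 (sq_nonneg s)) _
  · -- far case : u' = -1, t on far arc
    have hk1 : -1 < k := aux_neg_one_lt hk2
    have hslam : s * lam < 0 := by
      rw [hu'1] at hnt'2
      exact aux_neg_factor hnt'2 (sub_neg.mpr hk1)
    have hnt2' : 0 < (u - k) * (s * lam) := by rw [mul_comm]; exact hnt2
    have huk : u - k < 0 := aux_neg_factor hnt2' hslam
    have hu'k : u' - k < 0 := by rw [hu'1]; exact sub_neg.mpr hk1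
    have hA0 : 0 < s ^ 2 * (k - u) :=
      mul_pos (pow_pos hs 2) (by rw [← neg_sub u k]; exact neg_pos.mpr huk)
    have hA0' : 0 < s ^ 2 * (k - u') :=
      mul_pos (pow_pos hs 2) (by rw [← neg_sub u' k]; exact neg_pos.mpr hu'k)
    have hflip : (s ^ 2 * (u - k)) ^ 2 = (s ^ 2 * (k - u)) ^ 2 := by ring
    have hflip' : (s ^ 2 * (u' - k)) ^ 2 = (s ^ 2 * (k - u')) ^ 2 := by ring
    rw [hflip, hflip']
    rw [Real.sqrt_mul (sq_nonneg (s ^ 2 * (k - u)))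
        ((u * s ^ 2 + k * (1 + c ^ 2)) ^ 2 + 4 * c ^ 2 * (1 - k ^ 2)), Real.sqrt_sq hA0.le,
      Real.sqrt_mul (sq_nonneg (s ^ 2 * (k - u')))
        ((u' * s ^ 2 + k * (1 + c ^ 2)) ^ 2 + 4 * c ^ 2 * (1 - k ^ 2)), Real.sqrt_sq hA0'.le]
    rw [show -(s ^ 2 * (u - k) * (u * s ^ 2 + k * (1 + c ^ 2)))
        = s ^ 2 * (k - u) * (u * s ^ 2 + k * (1 + c ^ 2)) by ring]
    rw [show -(s ^ 2 * (u' - k) * (u' * s ^ 2 + k * (1 + c ^ 2)))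
        = s ^ 2 * (k - u') * (u' * s ^ 2 + k * (1 + c ^ 2)) by ring]
    rw [hcancel2 _ _ _ (ne_of_gt hA0), hcancel2 _ _ _ (ne_of_gt hA0')]
    apply mono_div_sqrt hG
    have hu1 : u' ≤ u := by rw [hu'1]; exact (aux_u_bounds huw).1
    exact add_le_add_left (mul_le_mul_of_nonneg_right hu1 (sq_nonneg s)) _
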